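/- Every 2-dimensional subspace N of ℝ⁴ that is totally null with respect to B is equal to N₊(φ) for some φ ∈ [0, 2π) or to N₋(φ) for some φ ∈ [0, 2π). -/

import Mathlib

/-- The standard split signature bilinear form on ℝ⁴ = ℝ^(2,2). -/
def B (y z : Fin 4 → ℝ) : ℝ := y 0 * z 0 + y 1 * z 1 - y 2 * z 2 - y 3 * z 3

/-- A subspace of ℝ⁴ is totally null w.r.t. `B` if `B` vanishes identically on it. -/
def TotallyNull (N : Submodule ℝ (Fin 4 → ℝ)) : Prop :=
  ∀ v ∈ N, ∀ w ∈ N, B v w = 0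

/-- The selfdual totally null plane `N₊(φ)`. -/
noncomputable def Nplus (φ : ℝ) : Submodule ℝ (Fin 4 → ℝ) :=
  Submodule.span ℝ {![1, 0, Real.cos φ, Real.sin φ], ![0, 1, Real.sin φ, -Real.cos φ]}

/-- The antiselfdual totally null plane `N₋(φ)`. -/
noncomputable def Nminus (φ : ℝ) : Submodule ℝ (Fin 4 → ℝ) :=
  Submodule.span ℝ {![1, 0, Real.cos φ, Real.sin φ], ![0, 1, -Real.sin φ, Real.cos φ]}

lemma exists_angle (x y : ℝ) (h : x^2 + y^2 = 1) :
    ∃ φ ∈ Set.Ico (0:ℝ) (2*Real.pi), Real.cos φ = x ∧ Real.sin φ = y := by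
  set z : ℂ := ⟨x, y⟩ with hz
  have habs : ‖z‖ = 1 := by
    have : Complex.normSq z = 1 := by simp [Complex.normSq, hz]; nlinarith
    rw [Complex.norm_def, this, Real.sqrt_one]
  have hz0 : z ≠ 0 := by
    intro h0; rw [h0] at habs; simp at habs
  have hc : Real.cos (Complex.arg z) = x := by
    rw [Complex.cos_arg hz0, habs]; simp [hz]
  have hs : Real.sin (Complex.arg z) = y := by
    rw [Complex.sin_arg, habs]; simp [hz]
  have hmem := Complex.arg_mem_Ioc z
  have hpi := Real.pi_pos
  rcases le_or_gt 0 (Complex.arg z) with hge | hlt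
  · exact ⟨Complex.arg z, ⟨hge, by linarith [hmem.2]⟩, hc, hs⟩
  · refine ⟨Complex.arg z + 2*Real.pi, ⟨by linarith [hmem.1], by linarith⟩, ?_, ?_⟩
    · rw [Real.cos_add_two_pi]; exact hc
    · rw [Real.sin_add_two_pi]; exact hs

lemma ortho_pair (c1 d1 c2 d2 : ℝ) (h1 : c1^2+d1^2=1) (h2 : c2^2+d2^2=1)
    (h3 : c1*c2 + d1*d2 = 0) :
    (c2 = d1 ∧ d2 = -c1) ∨ (c2 = -d1 ∧ d2 = c1) := by
  have he : (c1*d2 - d1*c2)^2 = 1 := by nlinarith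
  rcases sq_eq_one_iff.mp he with h | h
  · right
    exact ⟨by linear_combination -c2*h1 + c1*h3 - d1*h, by linear_combination -d2*h1 + d1*h3 + c1*h⟩
  · left
    exact ⟨by linear_combination -c2*h1 + c1*h3 - d1*h, by linear_combination -d2*h1 + d1*h3 + c1*h⟩

/-- projection to first two coordinates -/
def proj2 : (Fin 4 → ℝ) →ₗ[ℝ] (Fin 2 → ℝ) where
  toFun v := ![v 0, v 1]
  map_add' u v := by funext i; fin_cases i <;> simp
  map_smul' c v := by funext i; fin_cases i <;> simp

lemma span_pair_eq_range (u w : Fin 4 → ℝ) :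
    Submodule.span ℝ {u, w} = Submodule.span ℝ (Set.range ![u, w]) := by
  congr 1
  ext x
  simp only [Fin.exists_fin_two, Matrix.cons_val_zero, Matrix.cons_val_one, Matrix.head_cons,
    Set.mem_insert_iff, Set.mem_singleton_iff, Set.mem_range]
  tauto

theorem stmt_2 (N : Submodule ℝ (Fin 4 → ℝ))
    (hdim : Module.finrank ℝ N = 2) (hnull : TotallyNull N) :
    (∃ φ ∈ Set.Ico (0 : ℝ) (2 * Real.pi), N = Nplus φ) ∨
    (∃ φ ∈ Set.Ico (0 : ℝ) (2 * Real.pi), N = Nminus φ) := by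
  classical
  have hFD : FiniteDimensional ℝ N := by
    have : FiniteDimensional ℝ (Fin 4 → ℝ) := inferInstance
    infer_instance
  set f : N →ₗ[ℝ] (Fin 2 → ℝ) := proj2.comp N.subtype with hf
  have hinj : Function.Injective f := by
    rw [← LinearMap.ker_eq_bot]
    rw [Submodule.eq_bot_iff]
    rintro ⟨v, hv⟩ hker
    have h01 : v 0 = 0 ∧ v 1 = 0 := by
      have : (![v 0, v 1] : Fin 2 → ℝ) = 0 := hker
      exact ⟨congrFun this 0, congrFun this 1⟩
    have hBv := hnull v hv v hv
    unfold B at hBv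
    have h2 : v 2 = 0 ∧ v 3 = 0 := by
      constructor <;> nlinarith [h01.1, h01.2, sq_nonneg (v 2), sq_nonneg (v 3)]
    ext i
    fin_cases i <;> simp [h01.1, h01.2, h2.1, h2.2]
  have hsurj : Function.Surjective f :=
    (LinearMap.injective_iff_surjective_of_finrank_eq_finrank
      (by rw [hdim, Module.finrank_fin_fun])).mp hinj
  obtain ⟨⟨u, hu⟩, huv⟩ := hsurj ![1, 0]
  obtain ⟨⟨w, hw⟩, hwv⟩ := hsurj ![0, 1]
  have hu0 : u 0 = 1 := by simpa [hf, proj2] using congrFun huv 0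
  have hu1 : u 1 = 0 := by simpa [hf, proj2] using congrFun huv 1
  have hw0 : w 0 = 0 := by simpa [hf, proj2] using congrFun hwv 0
  have hw1 : w 1 = 1 := by simpa [hf, proj2] using congrFun hwv 1
  -- null relations
  have hBu := hnull u hu u hu
  have hBw := hnull w hw w hw
  have hBuw := hnull u hu w hw
  unfold B at hBu hBw hBuw
  rw [hu0, hu1] at hBu hBuw
  rw [hw0, hw1] at hBw hBuw
  clear huv hwv hsurj hinj
  have h1 : (u 2)^2 + (u 3)^2 = 1 := by linear_combination -hBu
  have h2 : (w 2)^2 + (w 3)^2 = 1 := by linear_combination -hBw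
  have h3 : (u 2)*(w 2) + (u 3)*(w 3) = 0 := by linear_combination -hBuw
  obtain ⟨φ, hφmem, hcos, hsin⟩ := exists_angle (u 2) (u 3) h1
  -- N = span {u, w}
  have hspan : N = Submodule.span ℝ {u, w} := by
    have hle : Submodule.span ℝ {u, w} ≤ N := by
      rw [Submodule.span_le]
      rintro x (rfl | rfl) <;> assumption
    have hli : LinearIndependent ℝ ![u, w] := by
      rw [LinearIndependent.pair_iff]
      intro s t hst
      constructor
      · have := congrFun hst 0
        simpa [hu0, hw0] using this
      · have := congrFun hst 1
        simpa [hu1, hw1] using this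
    have hfr : Module.finrank ℝ (Submodule.span ℝ {u, w}) = 2 := by
      rw [span_pair_eq_range]
      rw [finrank_span_eq_card hli]
      simp
    exact (Submodule.eq_of_le_of_finrank_le hle (by rw [hfr, hdim])).symm
  rcases ortho_pair (u 2) (u 3) (w 2) (w 3) h1 h2 h3 with ⟨hc2, hd2⟩ | ⟨hc2, hd2⟩
  · -- w2 = u3 = sin φ, w3 = -u2 = -cos φ : Nplus
    left
    refine ⟨φ, hφmem, ?_⟩
    rw [hspan]
    unfold Nplus
    congr 1
    have hueq : u = ![1, 0, Real.cos φ, Real.sin φ] := by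
      funext i; fin_cases i <;> simp [hu0, hu1, hcos, hsin]
    have hweq : w = ![0, 1, Real.sin φ, -Real.cos φ] := by
      funext i; fin_cases i <;> simp [hw0, hw1, hc2, hd2, hcos, hsin]
    rw [hueq, hweq]
  · -- w2 = -u3 = -sin φ, w3 = u2 = cos φ : Nminus
    right
    refine ⟨φ, hφmem, ?_⟩
    rw [hspan]
    unfold Nminus
    congr 1
    have hueq : u = ![1, 0, Real.cos φ, Real.sin φ] := by
      funext i; fin_cases i <;> simp [hu0, hu1, hcos, hsin]
    have hweq : w = ![0, 1, -Real.sin φ, Real.cos φ] := by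
      funext i; fin_cases i <;> simp [hw0, hw1, hc2, hd2, hcos, hsin]
    rw [hueq, hweq]
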